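/- The Burkhardt invariant B₄(T₀,...,T₄) = T₀⁴ + 8·T₀·(T₁³+T₂³+T₃³+T₄³) + 48·T₁T₂T₃T₄ is invariant under the linear substitutions given by diag(1,ω,1,ω,ω), diag(1,1,ω,ω,ω), diag(1,1,1,ω,ω²) for ω = e^{2πi/3}, and under the substitution given by the matrix Ψ(J) = (1/3)·[[-1,-2,-2,-2,-2],[-1,1,-2,1,1],[-1,-2,1,1,1],[-1,1,1,1,-2],[-1,1,1,-2,1]] up to the factor det(Ψ(J))⁻¹ absorbed in the normalization, i.e., B₄((T₀,...,T₄)·Ψ(J)ᵗ) = B₄(T₀,...,T₄). -/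

import Mathlib

open Matrix

noncomputable section

/-- `ω = e^{2πi/3}`. -/
def ω : ℂ := Complex.exp (2 * Real.pi * Complex.I / 3)

def D1 : Matrix (Fin 5) (Fin 5) ℂ := Matrix.diagonal ![1, ω, 1, ω, ω]
def D2 : Matrix (Fin 5) (Fin 5) ℂ := Matrix.diagonal ![1, 1, ω, ω, ω]
def D3 : Matrix (Fin 5) (Fin 5) ℂ := Matrix.diagonal ![1, 1, 1, ω, ω^2]

def PsiJ : Matrix (Fin 5) (Fin 5) ℂ :=
  (1/3 : ℂ) • !![-1,-2,-2,-2,-2; -1,1,-2,1,1; -1,-2,1,1,1; -1,1,1,1,-2; -1,1,1,-2,1]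

/-- The degree 4 Burkhardt invariant `B₄`. -/
def B4 (T : Fin 5 → ℂ) : ℂ :=
  T 0 ^ 4 + 8 * T 0 * (T 1 ^ 3 + T 2 ^ 3 + T 3 ^ 3 + T 4 ^ 3) +
    48 * (T 1 * T 2 * T 3 * T 4)

lemma omega_cube : ω ^ 3 = 1 := by
  rw [ω, ← Complex.exp_nat_mul]
  have : (3 : ℂ) * (2 * Real.pi * Complex.I / 3) = 2 * Real.pi * Complex.I := by ring
  rw [show ((3 : ℕ) : ℂ) = (3 : ℂ) by norm_num, this, Complex.exp_two_pi_mul_I]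

set_option maxRecDepth 8000 in
set_option maxHeartbeats 1600000 in
/-- `B₄` is invariant under the substitutions given by `D₁, D₂, D₃` and `Ψ(J)`. -/
theorem B4_invariant :
    ∀ T : Fin 5 → ℂ,
      B4 (D1.mulVec T) = B4 T ∧ B4 (D2.mulVec T) = B4 T ∧
      B4 (D3.mulVec T) = B4 T ∧ B4 (PsiJ.mulVec T) = B4 T := by
  intro T
  have hω := omega_cube
  refine ⟨?_, ?_, ?_, ?_⟩
  · simp only [B4, D1, Matrix.mulVec_diagonal]
    norm_num [Matrix.cons_val_zero, Matrix.cons_val_one, Matrix.head_cons, Matrix.cons_val_two,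
      Matrix.cons_val_three, Matrix.cons_val_four, Matrix.tail_cons]
    linear_combination (8 * T 0 * (T 1 ^ 3 + T 3 ^ 3 + T 4 ^ 3) + 48 * T 1 * T 2 * T 3 * T 4) * hω
  · simp only [B4, D2, Matrix.mulVec_diagonal]
    norm_num [Matrix.cons_val_zero, Matrix.cons_val_one, Matrix.head_cons, Matrix.cons_val_two,
      Matrix.cons_val_three, Matrix.cons_val_four, Matrix.tail_cons]
    linear_combination (8 * T 0 * (T 2 ^ 3 + T 3 ^ 3 + T 4 ^ 3) + 48 * T 1 * T 2 * T 3 * T 4) * hω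
  · simp only [B4, D3, Matrix.mulVec_diagonal]
    norm_num [Matrix.cons_val_zero, Matrix.cons_val_one, Matrix.head_cons, Matrix.cons_val_two,
      Matrix.cons_val_three, Matrix.cons_val_four, Matrix.tail_cons]
    linear_combination (8 * T 0 * (T 3 ^ 3 + (ω ^ 3 + 1) * T 4 ^ 3) + 48 * T 1 * T 2 * T 3 * T 4) * hω
  · rw [show PsiJ.mulVec T = (1/3 : ℂ) •
        ![-T 0-2*T 1-2*T 2-2*T 3-2*T 4, -T 0+T 1-2*T 2+T 3+T 4, -T 0-2*T 1+T 2+T 3+T 4,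
          -T 0+T 1+T 2+T 3-2*T 4, -T 0+T 1+T 2-2*T 3+T 4] from ?_]
    · simp only [B4, Pi.smul_apply, smul_eq_mul, Matrix.cons_val_zero, Matrix.cons_val_one,
        Matrix.head_cons]
      norm_num [Matrix.cons_val_zero, Matrix.cons_val_one, Matrix.head_cons, Matrix.cons_val_two,
        Matrix.cons_val_three, Matrix.cons_val_four, Matrix.tail_cons]
      ring
    · rw [PsiJ, smul_mulVec]
      congr 1
      funext i
      fin_cases i <;>
      · simp [Matrix.mulVec, dotProduct, Fin.sum_univ_five]
        ring
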